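/- Let W ∈ ℝ^{d×c} with W Wᵀ invertible (so d ≤ c and W has full row rank). Then Tr((W Wᵀ)^{1/2}) − Tr(Wᵀ (W Wᵀ)^{−1/2} W) = 0; more generally, for any V ∈ ℝ^{d×c}, Tr((V Vᵀ)^{1/2}) ≤ Tr(Vᵀ (W Wᵀ)^{−1/2} V)/2 + Tr((W Wᵀ)^{1/2})/2. -/

import Mathlib

open Matrix

noncomputable def Matrix.PosSemidef.sqrt {n 𝕜 : Type*} [Fintype n] [RCLike 𝕜] [DecidableEq n]
    [PartialOrder 𝕜] [StarOrderedRing 𝕜]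
    {A : Matrix n n 𝕜} (hA : A.PosSemidef) : Matrix n n 𝕜 :=
  hA.1.eigenvectorUnitary.1 * diagonal ((↑) ∘ Real.sqrt ∘ hA.1.eigenvalues) *
    (star hA.1.eigenvectorUnitary : Matrix n n 𝕜)

lemma Matrix.PosSemidef.posSemidef_sqrt {n : Type*} [Fintype n] [DecidableEq n]
    {A : Matrix n n ℝ} (hA : A.PosSemidef) : hA.sqrt.PosSemidef := by
  unfold Matrix.PosSemidef.sqrt
  have hD : (diagonal (RCLike.ofReal ∘ Real.sqrt ∘ hA.1.eigenvalues) : Matrix n n ℝ).PosSemidef := by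
    rw [posSemidef_diagonal_iff]
    intro i
    exact Real.sqrt_nonneg _
  exact hD.mul_mul_conjTranspose_same _

lemma Matrix.PosSemidef.sqrt_mul_self {n : Type*} [Fintype n] [DecidableEq n]
    {A : Matrix n n ℝ} (hA : A.PosSemidef) : hA.sqrt * hA.sqrt = A := by
  unfold Matrix.PosSemidef.sqrt
  have hU : (star hA.1.eigenvectorUnitary : Matrix n n ℝ) * hA.1.eigenvectorUnitary.1 = 1 :=
    Unitary.coe_star_mul_self _
  have hDD : (diagonal (RCLike.ofReal ∘ Real.sqrt ∘ hA.1.eigenvalues) : Matrix n n ℝ) *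
      diagonal (RCLike.ofReal ∘ Real.sqrt ∘ hA.1.eigenvalues) = diagonal (RCLike.ofReal ∘ hA.1.eigenvalues) := by
    rw [diagonal_mul_diagonal]
    congr 1
    funext i
    simp [Real.mul_self_sqrt (hA.eigenvalues_nonneg i)]
  calc _ = hA.1.eigenvectorUnitary.1 * ((diagonal (RCLike.ofReal ∘ Real.sqrt ∘ hA.1.eigenvalues) : Matrix n n ℝ) *
      ((star hA.1.eigenvectorUnitary : Matrix n n ℝ) * hA.1.eigenvectorUnitary.1) *
      diagonal (RCLike.ofReal ∘ Real.sqrt ∘ hA.1.eigenvalues)) * (star hA.1.eigenvectorUnitary : Matrix n n ℝ) := by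
        simp only [Matrix.mul_assoc]
    _ = A := by
      rw [hU, Matrix.mul_one, hDD]
      conv_rhs => rw [hA.1.spectral_theorem, Unitary.conjStarAlgAut_apply]

lemma psd_trace_nonneg {n : ℕ} {A : Matrix (Fin n) (Fin n) ℝ} (hA : A.PosSemidef) :
    0 ≤ A.trace := by
  exact hA.trace_nonneg

/-- for `W ∈ ℝ^{d×c}` with `W Wᵀ` positive definite,
`Tr((W Wᵀ)^{1/2}) − Tr(Wᵀ (W Wᵀ)^{−1/2} W) = 0`, and for any `V ∈ ℝ^{d×c}`,
`Tr((V Vᵀ)^{1/2}) ≤ Tr(Vᵀ (W Wᵀ)^{−1/2} V)/2 + Tr((W Wᵀ)^{1/2})/2`.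
Here `(W Wᵀ)^{1/2}` is the PSD square root and `(W Wᵀ)^{−1/2}` its inverse. -/
theorem stmt_13 (d c : ℕ) (W : Matrix (Fin d) (Fin c) ℝ)
    (hW : (W * Wᴴ).PosDef) :
    (hW.posSemidef.sqrt.trace - (Wᵀ * (hW.posSemidef.sqrt)⁻¹ * W).trace = 0) ∧
    (∀ V : Matrix (Fin d) (Fin c) ℝ,
      (Matrix.posSemidef_self_mul_conjTranspose V).sqrt.trace ≤
        (Vᵀ * (hW.posSemidef.sqrt)⁻¹ * V).trace / 2 + hW.posSemidef.sqrt.trace / 2) := by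
  set S := hW.posSemidef.sqrt with hSdef
  have hS : S.PosSemidef := hW.posSemidef.posSemidef_sqrt
  have hSS : S * S = W * Wᴴ := hW.posSemidef.sqrt_mul_self
  have hSh : Sᴴ = S := hS.1
  have hdet : IsUnit S.det := by
    have h1 : S.det * S.det = (W * Wᴴ).det := by rw [← Matrix.det_mul, hSS]
    have h2 : (0:ℝ) < (W * Wᴴ).det := hW.det_pos
    have : S.det ≠ 0 := by
      intro h
      rw [h, mul_zero] at h1
      exact h2.ne' h1.symm
    exact this.isUnit
  have hWt : Wᴴ = Wᵀ := by
    ext i j; simp [Matrix.conjTranspose_apply]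
  -- first part
  have part1 : S.trace - (Wᵀ * S⁻¹ * W).trace = 0 := by
    have : (Wᵀ * S⁻¹ * W).trace = S.trace := by
      rw [Matrix.trace_mul_comm, ← Matrix.mul_assoc, ← hWt, ← hSS, Matrix.mul_assoc,
        Matrix.mul_nonsing_inv _ hdet, Matrix.mul_one]
    rw [this, sub_self]
  refine ⟨part1, fun V => ?_⟩
  set T := (Matrix.posSemidef_self_mul_conjTranspose V).sqrt with hTdef
  have hT : T.PosSemidef := (Matrix.posSemidef_self_mul_conjTranspose V).posSemidef_sqrt
  have hTT : T * T = V * Vᴴ := (Matrix.posSemidef_self_mul_conjTranspose V).sqrt_mul_self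
  have hTh : Tᴴ = T := hT.1
  have hVt : Vᴴ = Vᵀ := by
    ext i j; simp [Matrix.conjTranspose_apply]
  -- trace of Vᵀ S⁻¹ V equals trace of S⁻¹ (T T)
  have htr : (Vᵀ * S⁻¹ * V).trace = (S⁻¹ * (T * T)).trace := by
    rw [Matrix.trace_mul_comm, ← Matrix.mul_assoc, ← hVt, ← hTT, Matrix.trace_mul_comm]
  -- expand (T - S) S⁻¹ (T - S)
  have expand : (T - S) * S⁻¹ * (T - S) = T * (S⁻¹ * T) - T - T + S := by
    have h1 : S * S⁻¹ = 1 := Matrix.mul_nonsing_inv _ hdet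
    have h2 : S⁻¹ * S = 1 := Matrix.nonsing_inv_mul _ hdet
    rw [Matrix.sub_mul, Matrix.mul_sub, Matrix.sub_mul, Matrix.sub_mul,
      Matrix.mul_assoc T, Matrix.mul_assoc T, h2, Matrix.mul_one,
      Matrix.mul_assoc S, Matrix.mul_assoc S, h2, Matrix.mul_one,
      ← Matrix.mul_assoc S, h1, Matrix.one_mul]
    abel
  have hpsd : ((T - S)ᴴ * S⁻¹ * (T - S)).PosSemidef :=
    hS.inv.conjTranspose_mul_mul_same (T - S)
  have hsub : (T - S)ᴴ = T - S := by rw [Matrix.conjTranspose_sub, hTh, hSh]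
  have key : 0 ≤ (S⁻¹ * (T * T)).trace + S.trace - 2 * T.trace := by
    have h0 := psd_trace_nonneg hpsd
    rw [hsub, expand] at h0
    have : (T * (S⁻¹ * T)).trace = (S⁻¹ * (T * T)).trace := by
      rw [Matrix.trace_mul_comm, Matrix.mul_assoc]
    simp only [Matrix.trace_add, Matrix.trace_sub, this] at h0
    linarith
  rw [htr]
  linarith
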